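/- Let α* be a curve in Minkowski 3-space E₁³ with Frenet frame (T*, N*, B*) and let α(s*) = α*(s*) + λ(s*)B*(s*) be a curve whose principal normal N at each point is parallel to B* at the corresponding point (a Mannheim pair). Then λ is constant, i.e., dλ/ds* = 0. -/

import Mathlib

noncomputable section

/-- Minkowski metric on `E₁³ = ℝ × ℝ × ℝ`: `⟨x,y⟩ = -x₁y₁ + x₂y₂ + x₃y₃`. -/
def mink (x y : ℝ × ℝ × ℝ) : ℝ :=
  -(x.1 * y.1) + x.2.1 * y.2.1 + x.2.2 * y.2.2

lemma mink_add_left (a b c : ℝ × ℝ × ℝ) : mink (a + b) c = mink a c + mink b c := by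
  simp [mink]; ring

lemma mink_smul_left (r : ℝ) (a c : ℝ × ℝ × ℝ) : mink (r • a) c = r * mink a c := by
  simp [mink]; ring

/-- Let `α*` (written `αst`) be a unit-speed curve in `E₁³` with Frenet frame
`(Tst, Nst, Bst)` satisfying `(B*)' = τ* N*`, and let `α(s*) = α*(s*) + λ(s*) B*(s*)` be a curve
whose principal normal `N` at each point is parallel to `B*` (Mannheim pair).
Then `λ` is constant, i.e. `dλ/ds* = 0`. -/
theorem mannheim_lambda_constant
    (αst Tst Nst Bst : ℝ → ℝ × ℝ × ℝ) (τst lam : ℝ → ℝ)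
    (α T N : ℝ → ℝ × ℝ × ℝ) (f : ℝ → ℝ)
    -- differentiability
    (hαst_diff : Differentiable ℝ αst)
    (hBst_diff : Differentiable ℝ Bst)
    (hlam_diff : Differentiable ℝ lam)
    -- α* is unit speed with tangent T*
    (hTst : ∀ s, deriv αst s = Tst s)
    -- Frenet equation for the binormal of α*
    (hFrenetB : ∀ s, deriv Bst s = τst s • Nst s)
    -- orthogonality of the frame of α*, and B* is non-null
    (hTB : ∀ s, mink (Tst s) (Bst s) = 0)
    (hNB : ∀ s, mink (Nst s) (Bst s) = 0)
    (hBB : ∀ s, mink (Bst s) (Bst s) ≠ 0)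
    -- the Mannheim partner curve α
    (hα : ∀ s, α s = αst s + lam s • Bst s)
    -- T is the (non-null) tangent direction of α
    (hT : ∀ s, deriv α s = f s • T s)
    (hf : ∀ s, f s ≠ 0)
    -- N is the principal normal of α, orthogonal to T
    (hTN : ∀ s, mink (T s) (N s) = 0)
    -- the principal normal of α is parallel to the binormal of α*
    (hpar : ∀ s, ∃ c : ℝ, c ≠ 0 ∧ N s = c • Bst s) :
    ∀ s, deriv lam s = 0 := by
  intro s
  -- derivative of α
  have hαfun : α = fun t => αst t + lam t • Bst t := funext hα
  have hderiv : deriv α s = Tst s + (deriv lam s • Bst s + lam s • deriv Bst s) := by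
    rw [hαfun]
    rw [deriv_fun_add (g := fun t => lam t • Bst t) (hαst_diff s) ((hlam_diff s).smul (hBst_diff s))]
    rw [deriv_fun_smul (hlam_diff s) (hBst_diff s), hTst]
    abel
  -- ⟨T, Bst⟩ = 0
  have hTBst : mink (T s) (Bst s) = 0 := by
    obtain ⟨c, hc, hN⟩ := hpar s
    have h0 := hTN s
    rw [hN] at h0
    have h0' : c * mink (T s) (Bst s) = 0 := by
      rw [← h0]; simp [mink]; ring
    exact (mul_eq_zero.mp h0').resolve_left hc
  -- take mink of both sides with Bst
  have key : f s * mink (T s) (Bst s) = deriv lam s * mink (Bst s) (Bst s) := by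
    have h1 := hT s
    rw [hderiv] at h1
    have := congrArg (fun v => mink v (Bst s)) h1
    simp only [mink_add_left, mink_smul_left, hFrenetB s] at this
    rw [hTB, hNB] at this
    linarith [this]
  rw [hTBst, mul_zero] at key
  exact (mul_eq_zero.mp key.symm).resolve_right (hBB s)
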